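/- Let f : [0,1] → ℝ be continuous and positive with t ↦ (1−t)/f(t) nonincreasing on [0,1], and set β = sup_{z∈[0,1]} ( 1 + f(1−z) + ∫_z^1 (1−t)/f(t) dt ). Let G = (V,E) be any finite simple graph with any arrival order v_1, …, v_n of its vertices, and run GreedyAllocation with allocation function f, producing final potentials y : V → [0,1]. Then y is a fractional vertex cover of G, and for every fractional vertex cover y* of G, Σ_{v∈V} y_v ≤ β · Σ_{v∈V} y*_v. -/

import Mathlib

open Finset

/-- The water level chosen by `GreedyAllocation` with allocation function `f`:
the supremum of `t ∈ [0,1]` such that raising all potentials in `S` up to `t`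
costs at most `f t`. -/
noncomputable def waterLevel {ι : Type*} (f : ℝ → ℝ) (S : Finset ι) (y : ι → ℝ) : ℝ :=
  sSup {t ∈ Set.Icc (0:ℝ) 1 | ∑ u ∈ S, max (t - y u) 0 ≤ f t}

/-- The previously arrived neighbors of vertex `i` (vertices arrive in the
order `0, 1, …, n-1`; `E` is the adjacency predicate of the graph). -/
def neighborsBefore {n : ℕ} (E : Fin n → Fin n → Bool) (i : Fin n) : Finset (Fin n) :=
  Finset.univ.filter fun j => j < i ∧ E j i = true

/-- Potentials maintained by `GreedyAllocation` with allocation function `f`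
after `i` vertices have been processed. When vertex `i` arrives, the water
level `w` is computed over its previously arrived neighbors; each such
neighbor's potential is raised to at least `w`, and vertex `i` receives
potential `1 - w`. -/
noncomputable def greedyPotential (f : ℝ → ℝ) {n : ℕ} (E : Fin n → Fin n → Bool) :
    ℕ → Fin n → ℝ
  | 0 => fun _ => 0
  | (i + 1) => fun v =>
      if h : i < n then
        let vi : Fin n := ⟨i, h⟩
        let w := waterLevel f (neighborsBefore E vi) (greedyPotential f E i)
        if v = vi then 1 - w
        else if v ∈ neighborsBefore E vi then max (greedyPotential f E i v) w
        else greedyPotential f E i v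
      else greedyPotential f E i v

/-- The water level used when processing vertex `i`. -/
noncomputable def stepLevel (f : ℝ → ℝ) {n : ℕ} (E : Fin n → Fin n → Bool) (i : Fin n) : ℝ :=
  waterLevel f (neighborsBefore E i) (greedyPotential f E i.val)

/-- The edge values set by the `PrimalDual` algorithm: when vertex `i` arrives,
for each previously arrived neighbor `j` the edge `(j,i)` receives value
`(max(w_i - y_j, 0)/β)·(1 + (1 - w_i)/f(w_i))`, using the potentials before
updating; all other pairs get `0`. -/
noncomputable def pdEdge (f : ℝ → ℝ) (β : ℝ) {n : ℕ} (E : Fin n → Fin n → Bool)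
    (j i : Fin n) : ℝ :=
  if j < i ∧ E j i = true then
    (max (stepLevel f E i - greedyPotential f E i.val j) 0 / β) *
      (1 + (1 - stepLevel f E i) / f (stepLevel f E i))
  else 0

/-! ### Auxiliary definitions for the proof -/

open Topology Filter

/-- The "bang-per-buck" function `(1-t)/f t`. -/
noncomputable def gfun (f : ℝ → ℝ) (t : ℝ) : ℝ := (1 - t) / f t

/-- Total amount spent raising neighbors when vertex `i` arrives. -/
noncomputable def spendA (f : ℝ → ℝ) {n : ℕ} (E : Fin n → Fin n → Bool) (i : Fin n) : ℝ :=
  ∑ u ∈ neighborsBefore E i, max (stepLevel f E i - greedyPotential f E i.val u) 0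

/-- `β`-scaled dual edge value. -/
noncomputable def xquot (f : ℝ → ℝ) {n : ℕ} (E : Fin n → Fin n → Bool) (j i : Fin n) : ℝ :=
  if j < i ∧ E j i = true then
    max (stepLevel f E i - greedyPotential f E i.val j) 0 * (1 + gfun f (stepLevel f E i))
  else 0

/-- Vertices with index `< m`. -/
def FlS (n m : ℕ) : Finset (Fin n) := Finset.univ.filter fun u => u.val < m

lemma FlS_zero (n : ℕ) : FlS n 0 = ∅ := by ext u; simp [FlS]

lemma FlS_succ_of_lt {n m : ℕ} (h : m < n) :
    FlS n (m+1) = insert (⟨m, h⟩ : Fin n) (FlS n m) := by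
  ext u
  simp only [FlS, Finset.mem_filter, Finset.mem_univ, true_and, Finset.mem_insert]
  constructor
  · intro hu
    rcases Nat.lt_or_ge u.val m with h1 | h1
    · exact Or.inr h1
    · left; apply Fin.ext; simp; omega
  · rintro (rfl | hu)
    · exact Nat.lt_succ_self m
    · omega

lemma not_mem_FlS {n m : ℕ} (h : m < n) : (⟨m, h⟩ : Fin n) ∉ FlS n m := by
  simp [FlS]

lemma FlS_succ_of_ge {n m : ℕ} (h : ¬ m < n) : FlS n (m+1) = FlS n m := by
  ext u
  simp only [FlS, Finset.mem_filter, Finset.mem_univ, true_and]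
  have := u.isLt
  omega

lemma FlS_n (n : ℕ) : FlS n n = Finset.univ := by
  ext u; simp [FlS, u.isLt]

section WL
variable {ι : Type*} (f : ℝ → ℝ) (S : Finset ι) (y : ι → ℝ)
  (hfc : ContinuousOn f (Set.Icc 0 1)) (hfpos : ∀ t ∈ Set.Icc (0:ℝ) 1, 0 < f t)
  (hy : ∀ u, 0 ≤ y u)

include hfc hfpos hy

lemma waterLevel_mem :
    waterLevel f S y ∈ {t ∈ Set.Icc (0:ℝ) 1 | ∑ u ∈ S, max (t - y u) 0 ≤ f t} := by
  set T := {t ∈ Set.Icc (0:ℝ) 1 | ∑ u ∈ S, max (t - y u) 0 ≤ f t} with hT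
  have hφ : Continuous (fun t : ℝ => ∑ u ∈ S, max (t - y u) 0) := by
    apply continuous_finset_sum
    intro u _
    exact (continuous_id.sub continuous_const).max continuous_const
  have hcont : ContinuousOn (fun t => (∑ u ∈ S, max (t - y u) 0) - f t) (Set.Icc 0 1) :=
    hφ.continuousOn.sub hfc
  have hclosed : IsClosed T := by
    have : T = Set.Icc (0:ℝ) 1 ∩
        (fun t => (∑ u ∈ S, max (t - y u) 0) - f t) ⁻¹' (Set.Iic 0) := by
      ext t
      simp only [hT, Set.mem_setOf_eq, Set.mem_inter_iff, Set.mem_preimage, Set.mem_Iic,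
        sub_nonpos]
    rw [this]
    exact hcont.preimage_isClosed_of_isClosed isClosed_Icc isClosed_Iic
  have h0 : (0:ℝ) ∈ T := by
    refine ⟨⟨le_refl _, zero_le_one⟩, ?_⟩
    have : ∑ u ∈ S, max ((0:ℝ) - y u) 0 = 0 := by
      apply Finset.sum_eq_zero
      intro u _
      simp [max_eq_right, hy u]
    rw [this]
    exact (hfpos 0 ⟨le_refl _, zero_le_one⟩).le
  have hbdd : BddAbove T := ⟨1, fun t ht => ht.1.2⟩
  exact hclosed.csSup_mem ⟨0, h0⟩ hbdd

lemma waterLevel_tight (hlt : waterLevel f S y < 1) :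
    f (waterLevel f S y) ≤ ∑ u ∈ S, max (waterLevel f S y - y u) 0 := by
  set w := waterLevel f S y with hw
  have hmem := waterLevel_mem f S y hfc hfpos hy
  have hw0 : 0 ≤ w := hmem.1.1
  set G := fun t : ℝ => f t - ∑ u ∈ S, max (t - y u) 0 with hG
  by_contra hcon
  push_neg at hcon
  have hGpos : 0 < G w := by simpa [hG] using hcon
  have hφ : Continuous (fun t : ℝ => ∑ u ∈ S, max (t - y u) 0) := by
    apply continuous_finset_sum
    intro u _
    exact (continuous_id.sub continuous_const).max continuous_const
  have hGc : ContinuousWithinAt G (Set.Icc 0 1) w :=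
    (hfc.sub hφ.continuousOn) w hmem.1
  have h1 : G ⁻¹' Set.Ioi 0 ∈ nhdsWithin w (Set.Icc 0 1) :=
    hGc (Ioi_mem_nhds hGpos)
  have hsub : Set.Ioo w 1 ⊆ Set.Icc (0:ℝ) 1 := fun t ht => ⟨hw0.trans ht.1.le, ht.2.le⟩
  have h2 : G ⁻¹' Set.Ioi 0 ∈ nhdsWithin w (Set.Ioo w 1) :=
    nhdsWithin_mono w hsub h1
  have h3 : Set.Ioo w 1 ∈ nhdsWithin w (Set.Ioo w 1) := self_mem_nhdsWithin
  have : (𝓝[Set.Ioo w 1] w).NeBot := left_nhdsWithin_Ioo_neBot hlt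
  obtain ⟨t, ht1, ht2⟩ := (Filter.Eventually.and h2 h3).exists
  have htT : t ∈ {t ∈ Set.Icc (0:ℝ) 1 | ∑ u ∈ S, max (t - y u) 0 ≤ f t} := by
    refine ⟨hsub ht2, ?_⟩
    have : 0 < G t := ht1
    simp only [hG, sub_pos] at this
    exact this.le
  have hle : t ≤ w := le_csSup ⟨1, fun s hs => hs.1.2⟩ htT
  exact absurd hle (not_le.mpr ht2.1)

end WL

section GP
variable (f : ℝ → ℝ) {n : ℕ} (E : Fin n → Fin n → Bool)

lemma mem_neighborsBefore {j i : Fin n} :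
    j ∈ neighborsBefore E i ↔ j < i ∧ E j i = true := by
  simp [neighborsBefore]

lemma greedyPotential_succ_of_lt {m : ℕ} (h : m < n) (v : Fin n) :
    greedyPotential f E (m+1) v =
      if v = (⟨m, h⟩ : Fin n) then 1 - stepLevel f E ⟨m, h⟩
      else if v ∈ neighborsBefore E ⟨m, h⟩ then
        max (greedyPotential f E m v) (stepLevel f E ⟨m, h⟩)
      else greedyPotential f E m v := by
  simp only [greedyPotential, h, dif_pos, stepLevel]

lemma greedyPotential_succ_of_ge {m : ℕ} (h : ¬ m < n) (v : Fin n) :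
    greedyPotential f E (m+1) v = greedyPotential f E m v := by
  simp only [greedyPotential, h, dif_neg, not_false_iff]

lemma greedyPotential_eq_zero {m : ℕ} {i : Fin n} (hmi : m ≤ i.val) :
    greedyPotential f E m i = 0 := by
  induction m with
  | zero => rfl
  | succ m ih =>
    have hm : m < i.val := hmi
    by_cases h : m < n
    · rw [greedyPotential_succ_of_lt f E h]
      have h1 : i ≠ (⟨m, h⟩ : Fin n) := by
        intro he; rw [he] at hm; exact lt_irrefl m hm
      have h2 : i ∉ neighborsBefore E ⟨m, h⟩ := by
        rw [mem_neighborsBefore]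
        rintro ⟨hlt, -⟩
        have h3 : (i:ℕ) < m := hlt
        omega
      rw [if_neg h1, if_neg h2]
      exact ih hm.le
    · rw [greedyPotential_succ_of_ge f E h]
      exact ih hm.le

lemma arriver_potential (i : Fin n) :
    greedyPotential f E (i.val+1) i = 1 - stepLevel f E i := by
  rw [greedyPotential_succ_of_lt f E i.isLt]
  simp

lemma neighbor_raised {j i : Fin n} (hj : j ∈ neighborsBefore E i) :
    stepLevel f E i ≤ greedyPotential f E (i.val+1) j := by
  rw [greedyPotential_succ_of_lt f E i.isLt]
  have hji : j ≠ (⟨i.val, i.isLt⟩ : Fin n) := by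
    have := (mem_neighborsBefore E).mp hj
    intro he
    exact absurd this.1 (by rw [he]; simp [Fin.lt_def])
  have hii : (⟨i.val, i.isLt⟩ : Fin n) = i := rfl
  rw [if_neg hji, hii, if_pos hj]
  exact le_max_right _ _

variable (hfc : ContinuousOn f (Set.Icc 0 1)) (hfpos : ∀ t ∈ Set.Icc (0:ℝ) 1, 0 < f t)
include hfc hfpos

lemma greedyPotential_mem (m : ℕ) (v : Fin n) :
    greedyPotential f E m v ∈ Set.Icc (0:ℝ) 1 := by
  induction m generalizing v with
  | zero => exact ⟨le_refl _, zero_le_one⟩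
  | succ m ih =>
    by_cases h : m < n
    · have hw := waterLevel_mem f (neighborsBefore E (⟨m,h⟩:Fin n))
        (greedyPotential f E m) hfc hfpos (fun u => (ih u).1)
      rw [greedyPotential_succ_of_lt f E h]
      split_ifs with h1 h2
      · constructor
        · simpa [stepLevel] using hw.1.2
        · simpa [stepLevel] using hw.1.1
      · exact ⟨le_trans (ih v).1 (le_max_left _ _),
          max_le (ih v).2 (by exact hw.1.2)⟩
      · exact ih v
    · rw [greedyPotential_succ_of_ge f E h]; exact ih v

lemma stepLevel_mem (i : Fin n) : stepLevel f E i ∈ Set.Icc (0:ℝ) 1 :=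
  (waterLevel_mem f _ _ hfc hfpos
    (fun u => (greedyPotential_mem f E hfc hfpos i.val u).1)).1

lemma stepLevel_spend (i : Fin n) : spendA f E i ≤ f (stepLevel f E i) :=
  (waterLevel_mem f _ _ hfc hfpos
    (fun u => (greedyPotential_mem f E hfc hfpos i.val u).1)).2

lemma stepLevel_tight (i : Fin n) (h : stepLevel f E i < 1) :
    f (stepLevel f E i) ≤ spendA f E i :=
  waterLevel_tight f _ _ hfc hfpos
    (fun u => (greedyPotential_mem f E hfc hfpos i.val u).1) h

lemma greedyPotential_mono_succ (m : ℕ) (v : Fin n) :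
    greedyPotential f E m v ≤ greedyPotential f E (m+1) v := by
  by_cases h : m < n
  · rw [greedyPotential_succ_of_lt f E h]
    split_ifs with h1 h2
    · rw [h1, greedyPotential_eq_zero f E (le_refl m)]
      have := (stepLevel_mem f E hfc hfpos ⟨m, h⟩).2
      linarith
    · exact le_max_left _ _
    · exact le_refl _
  · rw [greedyPotential_succ_of_ge f E h]

lemma greedyPotential_mono {m m' : ℕ} (hmm : m ≤ m') (v : Fin n) :
    greedyPotential f E m v ≤ greedyPotential f E m' v := by
  induction m' with
  | zero => simp_all
  | succ k ih =>
    rcases Nat.lt_or_ge m (k+1) with h | h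
    · exact le_trans (ih (by omega)) (greedyPotential_mono_succ f E hfc hfpos k v)
    · have : m = k + 1 := by omega
      subst this; exact le_refl _

omit hfc hfpos in
lemma gfun_nonneg (hfpos : ∀ t ∈ Set.Icc (0:ℝ) 1, 0 < f t) {t : ℝ}
    (ht : t ∈ Set.Icc (0:ℝ) 1) : 0 ≤ gfun f t :=
  div_nonneg (by linarith [ht.2]) (hfpos t ht).le

omit hfpos in
lemma gfun_contOn (hfpos : ∀ t ∈ Set.Icc (0:ℝ) 1, 0 < f t) :
    ContinuousOn (gfun f) (Set.Icc 0 1) :=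
  (continuous_const.sub continuous_id).continuousOn.div hfc
    (fun t ht => (hfpos t ht).ne')

lemma one_add_gfun_intble {a b : ℝ} (ha : a ∈ Set.Icc (0:ℝ) 1) (hb : b ∈ Set.Icc (0:ℝ) 1) :
    IntervalIntegrable (fun t => 1 + gfun f t) MeasureTheory.volume a b := by
  apply ContinuousOn.intervalIntegrable
  apply ContinuousOn.mono (continuousOn_const.add (gfun_contOn f hfc hfpos))
  exact Set.uIcc_subset_Icc ha hb

lemma gfun_intble {a b : ℝ} (ha : a ∈ Set.Icc (0:ℝ) 1) (hb : b ∈ Set.Icc (0:ℝ) 1) :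
    IntervalIntegrable (gfun f) MeasureTheory.volume a b := by
  apply ContinuousOn.intervalIntegrable
  apply ContinuousOn.mono (gfun_contOn f hfc hfpos)
  exact Set.uIcc_subset_Icc ha hb

omit hfc hfpos in
lemma xquot_nonneg (hfpos : ∀ t ∈ Set.Icc (0:ℝ) 1, 0 < f t)
    (hsl : ∀ i : Fin n, stepLevel f E i ∈ Set.Icc (0:ℝ) 1) (j i : Fin n) :
    0 ≤ xquot f E j i := by
  unfold xquot
  split_ifs with h
  · apply mul_nonneg (le_max_right _ _)
    have := gfun_nonneg f hfpos (hsl i)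
    linarith
  · exact le_refl _

omit hfc hfpos in
lemma sum_xquot_col (i : Fin n) :
    ∑ j, xquot f E j i = spendA f E i * (1 + gfun f (stepLevel f E i)) := by
  simp only [xquot]
  rw [← Finset.sum_filter, spendA, Finset.sum_mul]
  rfl

lemma primal_step_bound (i : Fin n) :
    (1 - stepLevel f E i) + spendA f E i ≤
      spendA f E i * (1 + gfun f (stepLevel f E i)) := by
  have hsl := stepLevel_mem f E hfc hfpos i
  have hA0 : 0 ≤ spendA f E i := by
    apply Finset.sum_nonneg; intro u _; exact le_max_right _ _
  rcases eq_or_lt_of_le hsl.2 with h1 | h1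
  · have hg := gfun_nonneg f hfpos hsl
    nlinarith
  · have ht := stepLevel_tight f E hfc hfpos i h1
    have hAf : spendA f E i = f (stepLevel f E i) :=
      le_antisymm (stepLevel_spend f E hfc hfpos i) ht
    have hfp : 0 < f (stepLevel f E i) := hfpos _ hsl
    rw [hAf, gfun, mul_add, mul_one, mul_div_cancel₀ _ (ne_of_gt hfp)]
    linarith

omit hfc hfpos in
lemma primal_step_identity {m : ℕ} (hm : m < n) :
    ∑ v, greedyPotential f E (m+1) v =
      ∑ v, greedyPotential f E m v +
        ((1 - stepLevel f E ⟨m, hm⟩) + spendA f E ⟨m, hm⟩) := by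
  set i : Fin n := ⟨m, hm⟩ with hi
  set w := stepLevel f E i with hwdef
  have hiS : i ∉ neighborsBefore E i := by
    rw [mem_neighborsBefore]
    rintro ⟨h1, -⟩; exact lt_irrefl _ h1
  have key : ∀ v, greedyPotential f E (m+1) v = greedyPotential f E m v +
      ((if v = i then 1 - w else 0) +
       (if v ∈ neighborsBefore E i then max (w - greedyPotential f E m v) 0 else 0)) := by
    intro v
    rw [greedyPotential_succ_of_lt f E hm v]
    by_cases h1 : v = i
    · rw [if_pos h1, if_pos h1, if_neg (h1 ▸ hiS)]
      have : greedyPotential f E m v = 0 := by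
        rw [h1]; exact greedyPotential_eq_zero f E (le_of_eq rfl)
      rw [this]; ring
    · rw [if_neg h1, if_neg h1]
      by_cases h2 : v ∈ neighborsBefore E i
      · rw [if_pos h2, if_pos h2]
        rcases le_total (greedyPotential f E m v) w with h3 | h3
        · rw [max_eq_right h3, max_eq_left (sub_nonneg.mpr h3)]; ring
        · rw [max_eq_left h3, max_eq_right (sub_nonpos.mpr h3)]; ring
      · rw [if_neg h2, if_neg h2]; ring
  calc ∑ v, greedyPotential f E (m+1) v
      = ∑ v, (greedyPotential f E m v +
          ((if v = i then 1 - w else 0) +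
           (if v ∈ neighborsBefore E i then max (w - greedyPotential f E m v) 0 else 0))) :=
        Finset.sum_congr rfl (fun v _ => key v)
    _ = ∑ v, greedyPotential f E m v + ((1 - w) + spendA f E i) := by
        rw [Finset.sum_add_distrib, Finset.sum_add_distrib]
        have e1 : ∑ v, (if v = i then 1 - w else 0) = 1 - w := by
          rw [Finset.sum_ite_eq' Finset.univ i (fun _ => 1 - w)]
          simp
        have e2 : ∑ v, (if v ∈ neighborsBefore E i then
            max (w - greedyPotential f E m v) 0 else 0) = spendA f E i := by
          rw [Finset.sum_ite_mem, Finset.univ_inter]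
          rfl
        rw [e1, e2]

lemma primal_cumulative (m : ℕ) :
    ∑ v, greedyPotential f E m v ≤
      ∑ i ∈ FlS n m, spendA f E i * (1 + gfun f (stepLevel f E i)) := by
  induction m with
  | zero =>
    rw [FlS_zero]
    simp [greedyPotential]
  | succ m ih =>
    by_cases hm : m < n
    · rw [primal_step_identity f E hm, FlS_succ_of_lt hm,
        Finset.sum_insert (not_mem_FlS hm)]
      have := primal_step_bound f E hfc hfpos ⟨m, hm⟩
      linarith
    · rw [FlS_succ_of_ge hm]
      calc ∑ v, greedyPotential f E (m+1) v = ∑ v, greedyPotential f E m v :=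
            Finset.sum_congr rfl (fun v _ => greedyPotential_succ_of_ge f E hm v)
        _ ≤ _ := ih

variable (hmono : ∀ s ∈ Set.Icc (0:ℝ) 1, ∀ t ∈ Set.Icc (0:ℝ) 1,
      s ≤ t → (1 - t) / f t ≤ (1 - s) / f s)
include hmono

lemma xquot_le_integral (v u0 : Fin n) (hvu : v.val < u0.val) :
    xquot f E v u0 ≤
      ∫ t in (greedyPotential f E u0.val v)..(greedyPotential f E (u0.val+1) v),
        (1 + gfun f t) := by
  have hu0 : (⟨u0.val, u0.isLt⟩ : Fin n) = u0 := rfl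
  have hvne : v ≠ (⟨u0.val, u0.isLt⟩ : Fin n) := by
    intro h
    rw [hu0] at h
    subst h
    exact lt_irrefl _ hvu
  have ha := greedyPotential_mem f E hfc hfpos u0.val v
  have hw := stepLevel_mem f E hfc hfpos u0
  set a := greedyPotential f E u0.val v with hadef
  set w := stepLevel f E u0 with hwdef
  rw [xquot]
  by_cases hc : v < u0 ∧ E v u0 = true
  · have hvS : v ∈ neighborsBefore E u0 := (mem_neighborsBefore E).mpr hc
    have hstep : greedyPotential f E (u0.val+1) v = max a w := by
      rw [greedyPotential_succ_of_lt f E u0.isLt v, if_neg hvne, hu0, if_pos hvS]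
    rw [hstep, if_pos hc]
    rcases le_total w a with h3 | h3
    · rw [max_eq_left h3, max_eq_right (sub_nonpos.mpr h3), intervalIntegral.integral_same]
      simp
    · rw [max_eq_right h3, max_eq_left (sub_nonneg.mpr h3)]
      have hconst : (w - a) * (1 + gfun f w) = ∫ _ in a..w, (1 + gfun f w) := by
        rw [intervalIntegral.integral_const, smul_eq_mul]
      rw [hconst]
      apply intervalIntegral.integral_mono_on h3
      · exact intervalIntegrable_const
      · exact one_add_gfun_intble f hfc hfpos ha hw
      · intro t ht
        have ht' : t ∈ Set.Icc (0:ℝ) 1 := ⟨ha.1.trans ht.1, ht.2.trans hw.2⟩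
        have := hmono t ht' w hw ht.2
        simp only [gfun]
        linarith
  · rw [if_neg hc]
    have hvS : v ∉ neighborsBefore E u0 := fun h => hc ((mem_neighborsBefore E).mp h)
    have hstep : greedyPotential f E (u0.val+1) v = a := by
      rw [greedyPotential_succ_of_lt f E u0.isLt v, if_neg hvne, hu0, if_neg hvS]
    rw [hstep, intervalIntegral.integral_same]

lemma dual_row_cumulative (v : Fin n) (m : ℕ) :
    ∑ u ∈ FlS n m, xquot f E v u ≤
      if v.val < m then
        ∫ t in (1 - stepLevel f E v)..(greedyPotential f E m v), (1 + gfun f t)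
      else 0 := by
  have h1w : 1 - stepLevel f E v ∈ Set.Icc (0:ℝ) 1 := by
    have := stepLevel_mem f E hfc hfpos v
    constructor <;> [linarith [this.2]; linarith [this.1]]
  induction m with
  | zero =>
    rw [FlS_zero]
    simp
  | succ m ih =>
    by_cases hm : m < n
    · rw [FlS_succ_of_lt hm, Finset.sum_insert (not_mem_FlS hm)]
      rcases lt_trichotomy v.val m with h1 | h1 | h1
      · rw [if_pos h1] at ih
        have hx := xquot_le_integral f E hfc hfpos hmono v ⟨m, hm⟩ h1
        simp only [Fin.val_mk] at hx
        have hadd :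
            (∫ t in (1 - stepLevel f E v)..(greedyPotential f E m v), (1 + gfun f t))
            + ∫ t in (greedyPotential f E m v)..(greedyPotential f E (m+1) v), (1 + gfun f t)
            = ∫ t in (1 - stepLevel f E v)..(greedyPotential f E (m+1) v), (1 + gfun f t) :=
          intervalIntegral.integral_add_adjacent_intervals
            (one_add_gfun_intble f hfc hfpos h1w (greedyPotential_mem f E hfc hfpos m v))
            (one_add_gfun_intble f hfc hfpos (greedyPotential_mem f E hfc hfpos m v)
              (greedyPotential_mem f E hfc hfpos (m+1) v))
        rw [if_pos (by omega : v.val < m+1)]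
        linarith
      · have hv : v = (⟨m, hm⟩ : Fin n) := Fin.ext h1
        rw [if_neg (by omega : ¬ v.val < m)] at ih
        have hx0 : xquot f E v ⟨m, hm⟩ = 0 := by
          rw [xquot, if_neg]
          rintro ⟨h, -⟩
          rw [← hv] at h
          exact lt_irrefl _ h
        have harr : greedyPotential f E (m+1) v = 1 - stepLevel f E v := by
          conv_lhs => rw [hv]
          have := arriver_potential f E (⟨m, hm⟩ : Fin n)
          simp only [Fin.val_mk] at this
          rw [this, hv]
        rw [if_pos (by omega : v.val < m+1), hx0, harr, intervalIntegral.integral_same]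
        linarith
      · have hx0 : xquot f E v ⟨m, hm⟩ = 0 := by
          rw [xquot, if_neg]
          rintro ⟨h, -⟩
          have : v.val < m := h
          omega
        rw [if_neg (by omega : ¬ v.val < m+1)]
        rw [if_neg (by omega : ¬ v.val < m)] at ih
        rw [hx0]
        linarith
    · rw [FlS_succ_of_ge hm]
      have hvm : v.val < m := by have := v.isLt; omega
      rw [if_pos hvm] at ih
      rw [if_pos (by omega : v.val < m+1), greedyPotential_succ_of_ge f E hm v]
      exact ih

lemma dual_row_total (v : Fin n) :
    ∑ u, xquot f E v u ≤
      stepLevel f E v + ∫ t in (1 - stepLevel f E v)..1, gfun f t := by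
  have h := dual_row_cumulative f E hfc hfpos hmono v n
  rw [FlS_n, if_pos v.isLt] at h
  have hw := stepLevel_mem f E hfc hfpos v
  have hY := greedyPotential_mem f E hfc hfpos n v
  have h1w : 1 - stepLevel f E v ∈ Set.Icc (0:ℝ) 1 := by
    constructor <;> [linarith [hw.2]; linarith [hw.1]]
  have hone : (1:ℝ) ∈ Set.Icc (0:ℝ) 1 := ⟨zero_le_one, le_refl _⟩
  have hadd :
      (∫ t in (1 - stepLevel f E v)..(greedyPotential f E n v), (1 + gfun f t))
      + ∫ t in (greedyPotential f E n v)..1, (1 + gfun f t)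
      = ∫ t in (1 - stepLevel f E v)..1, (1 + gfun f t) :=
    intervalIntegral.integral_add_adjacent_intervals
      (one_add_gfun_intble f hfc hfpos h1w hY)
      (one_add_gfun_intble f hfc hfpos hY hone)
  have hpos : 0 ≤ ∫ t in (greedyPotential f E n v)..1, (1 + gfun f t) := by
    apply intervalIntegral.integral_nonneg hY.2
    intro t ht
    have ht' : t ∈ Set.Icc (0:ℝ) 1 := ⟨hY.1.trans ht.1, ht.2⟩
    have := gfun_nonneg f hfpos ht'
    linarith
  have hsplit : ∫ t in (1 - stepLevel f E v)..1, (1 + gfun f t)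
      = stepLevel f E v + ∫ t in (1 - stepLevel f E v)..1, gfun f t := by
    rw [intervalIntegral.integral_add intervalIntegrable_const
      (gfun_intble f hfc hfpos h1w hone), intervalIntegral.integral_const]
    simp only [smul_eq_mul, mul_one]
    ring
  linarith

omit hmono in
lemma dual_col_total (v : Fin n) :
    spendA f E v * (1 + gfun f (stepLevel f E v)) ≤
      f (stepLevel f E v) + (1 - stepLevel f E v) := by
  have hw := stepLevel_mem f E hfc hfpos v
  have hA := stepLevel_spend f E hfc hfpos v
  have hA0 : 0 ≤ spendA f E v := by
    apply Finset.sum_nonneg; intro u _; exact le_max_right _ _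
  have hg0 : 0 ≤ gfun f (stepLevel f E v) := gfun_nonneg f hfpos hw
  have hfw : 0 < f (stepLevel f E v) := hfpos _ hw
  calc spendA f E v * (1 + gfun f (stepLevel f E v))
      ≤ f (stepLevel f E v) * (1 + gfun f (stepLevel f E v)) := by nlinarith
    _ = f (stepLevel f E v) + (1 - stepLevel f E v) := by
        rw [mul_add, mul_one, gfun, mul_div_cancel₀ _ (ne_of_gt hfw)]

lemma dual_feasible (β : ℝ)
    (hβ : β = ⨆ z : Set.Icc (0:ℝ) 1,
      (1 + f (1 - (z : ℝ)) + ∫ t in (z : ℝ)..1, (1 - t) / f t)) (v : Fin n) :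
    (∑ u, xquot f E v u) + spendA f E v * (1 + gfun f (stepLevel f E v)) ≤ β := by
  have hw := stepLevel_mem f E hfc hfpos v
  have h1w : 1 - stepLevel f E v ∈ Set.Icc (0:ℝ) 1 := by
    constructor <;> [linarith [hw.2]; linarith [hw.1]]
  have hrow := dual_row_total f E hfc hfpos hmono v
  have hcol := dual_col_total f E hfc hfpos v
  set F : Set.Icc (0:ℝ) 1 → ℝ := fun z =>
    1 + f (1 - (z : ℝ)) + ∫ t in (z : ℝ)..1, (1 - t) / f t with hF
  have hbdd : BddAbove (Set.range F) := by
    obtain ⟨x0, hx0, hmax⟩ := isCompact_Icc.exists_isMaxOn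
      (Set.nonempty_Icc.mpr zero_le_one) hfc
    refine ⟨1 + f x0 + ∫ t in (0:ℝ)..1, (1 - t) / f t, ?_⟩
    rintro r ⟨z, rfl⟩
    have hz := z.2
    have h1z : 1 - (z:ℝ) ∈ Set.Icc (0:ℝ) 1 := by
      constructor <;> [linarith [hz.2]; linarith [hz.1]]
    have hfle : f (1 - (z:ℝ)) ≤ f x0 := hmax h1z
    have hsplit : (∫ t in (0:ℝ)..1, (1 - t) / f t)
        = (∫ t in (0:ℝ)..(z:ℝ), (1 - t) / f t) + ∫ t in (z:ℝ)..1, (1 - t) / f t :=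
      (intervalIntegral.integral_add_adjacent_intervals
        (gfun_intble f hfc hfpos ⟨le_refl _, zero_le_one⟩ hz)
        (gfun_intble f hfc hfpos hz ⟨zero_le_one, le_refl _⟩)).symm
    have hpos0 : 0 ≤ ∫ t in (0:ℝ)..(z:ℝ), (1 - t) / f t := by
      apply intervalIntegral.integral_nonneg hz.1
      intro t ht
      exact gfun_nonneg f hfpos ⟨ht.1, ht.2.trans hz.2⟩
    simp only [hF]
    linarith
  have hle : F ⟨1 - stepLevel f E v, h1w⟩ ≤ β := by
    rw [hβ]
    exact le_ciSup hbdd _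
  simp only [hF] at hle
  have : (∫ t in (1 - stepLevel f E v)..1, gfun f t)
      = ∫ t in (1 - stepLevel f E v)..1, (1 - t) / f t := rfl
  rw [this] at hrow
  have h11 : 1 - (1 - stepLevel f E v) = stepLevel f E v := by ring
  rw [h11] at hle
  linarith

end GP

/-- General competitiveness of `GreedyAllocation(f)` for online fractional
vertex cover on an arbitrary finite simple graph with an arbitrary arrival
order: the final potentials form a fractional vertex cover of total size at
most `β = sup_{z∈[0,1]} (1 + f(1-z) + ∫_z^1 (1-t)/f t dt)` times the size of
any fractional vertex cover. -/
theorem greedyAllocation_competitive (f : ℝ → ℝ)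
    (hfc : ContinuousOn f (Set.Icc 0 1))
    (hfpos : ∀ t ∈ Set.Icc (0:ℝ) 1, 0 < f t)
    (hmono : ∀ s ∈ Set.Icc (0:ℝ) 1, ∀ t ∈ Set.Icc (0:ℝ) 1,
      s ≤ t → (1 - t) / f t ≤ (1 - s) / f s)
    (β : ℝ)
    (hβ : β = ⨆ z : Set.Icc (0:ℝ) 1,
      (1 + f (1 - (z : ℝ)) + ∫ t in (z : ℝ)..1, (1 - t) / f t))
    (n : ℕ) (E : Fin n → Fin n → Bool)
    (hsymm : ∀ i j, E i j = E j i) (hloop : ∀ i, E i i = false)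
    (y : Fin n → ℝ) (hy : y = greedyPotential f E n) :
    (∀ v, y v ∈ Set.Icc (0:ℝ) 1) ∧
    (∀ i j, E i j = true → 1 ≤ y i + y j) ∧
    (∀ ystar : Fin n → ℝ, (∀ v, ystar v ∈ Set.Icc (0:ℝ) 1) →
      (∀ i j, E i j = true → 1 ≤ ystar i + ystar j) →
      ∑ v, y v ≤ β * ∑ v, ystar v) := by
  subst hy
  have hymem : ∀ v, greedyPotential f E n v ∈ Set.Icc (0:ℝ) 1 :=
    fun v => greedyPotential_mem f E hfc hfpos n v
  have key : ∀ i j : Fin n, j < i → E j i = true →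
      1 ≤ greedyPotential f E n j + greedyPotential f E n i := by
    intro i j hji he
    have hjS : j ∈ neighborsBefore E i := (mem_neighborsBefore E).mpr ⟨hji, he⟩
    have h1 : stepLevel f E i ≤ greedyPotential f E (i.val+1) j :=
      neighbor_raised f E hjS
    have h2 : greedyPotential f E (i.val+1) i = 1 - stepLevel f E i :=
      arriver_potential f E i
    have hle : i.val + 1 ≤ n := i.isLt
    have m1 := greedyPotential_mono f E hfc hfpos hle j
    have m2 := greedyPotential_mono f E hfc hfpos hle i
    rw [h2] at m2
    linarith
  have cover : ∀ i j : Fin n, E i j = true →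
      1 ≤ greedyPotential f E n i + greedyPotential f E n j := by
    intro i j he
    rcases lt_trichotomy i j with h | h | h
    · exact key j i h he
    · subst h
      rw [hloop i] at he
      simp at he
    · have := key i j h ((hsymm j i).trans he)
      linarith
  refine ⟨hymem, cover, ?_⟩
  intro ystar hstar hcov
  have hsl : ∀ i : Fin n, stepLevel f E i ∈ Set.Icc (0:ℝ) 1 :=
    stepLevel_mem f E hfc hfpos
  have hxnn := xquot_nonneg f E hfpos hsl
  have step1 : ∑ v, greedyPotential f E n v ≤ ∑ i, ∑ j, xquot f E j i := by
    have h := primal_cumulative f E hfc hfpos n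
    rw [FlS_n] at h
    calc ∑ v, greedyPotential f E n v
        ≤ ∑ i, spendA f E i * (1 + gfun f (stepLevel f E i)) := h
      _ = ∑ i, ∑ j, xquot f E j i := by
          apply Finset.sum_congr rfl
          intro i _
          exact (sum_xquot_col f E i).symm
  have step2 : ∑ i : Fin n, ∑ j : Fin n, xquot f E j i ≤
      ∑ i : Fin n, ∑ j : Fin n, xquot f E j i * (ystar j + ystar i) := by
    apply Finset.sum_le_sum
    intro i _
    apply Finset.sum_le_sum
    intro j _
    by_cases hc : j < i ∧ E j i = true
    · exact le_mul_of_one_le_right (hxnn j i) (hcov j i hc.2)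
    · simp only [xquot, if_neg hc, zero_mul, le_refl]
  have step3 : ∑ i : Fin n, ∑ j : Fin n, xquot f E j i * (ystar j + ystar i)
      = ∑ v, ystar v * ((∑ u, xquot f E v u) + ∑ u, xquot f E u v) := by
    calc ∑ i : Fin n, ∑ j : Fin n, xquot f E j i * (ystar j + ystar i)
        = ∑ i : Fin n, ∑ j : Fin n,
            (ystar j * xquot f E j i + ystar i * xquot f E j i) := by
          apply Finset.sum_congr rfl; intro i _
          apply Finset.sum_congr rfl; intro j _
          ring
      _ = (∑ i : Fin n, ∑ j : Fin n, ystar j * xquot f E j i)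
          + (∑ i : Fin n, ∑ j : Fin n, ystar i * xquot f E j i) := by
          rw [← Finset.sum_add_distrib]
          apply Finset.sum_congr rfl; intro i _
          rw [Finset.sum_add_distrib]
      _ = (∑ j : Fin n, ystar j * ∑ i : Fin n, xquot f E j i)
          + (∑ i : Fin n, ystar i * ∑ j : Fin n, xquot f E j i) := by
          congr 1
          · rw [Finset.sum_comm]
            apply Finset.sum_congr rfl; intro j _
            rw [Finset.mul_sum]
          · apply Finset.sum_congr rfl; intro i _
            rw [Finset.mul_sum]
      _ = ∑ v, ystar v * ((∑ u, xquot f E v u) + ∑ u, xquot f E u v) := by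
          rw [← Finset.sum_add_distrib]
          apply Finset.sum_congr rfl; intro v _
          ring
  have step4 : ∀ v, (∑ u, xquot f E v u) + ∑ u, xquot f E u v ≤ β := by
    intro v
    have hdf := dual_feasible f E hfc hfpos hmono β hβ v
    rw [sum_xquot_col f E v]
    exact hdf
  calc ∑ v, greedyPotential f E n v
      ≤ ∑ i, ∑ j, xquot f E j i := step1
    _ ≤ ∑ i : Fin n, ∑ j : Fin n, xquot f E j i * (ystar j + ystar i) := step2
    _ = ∑ v, ystar v * ((∑ u, xquot f E v u) + ∑ u, xquot f E u v) := step3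
    _ ≤ ∑ v, ystar v * β :=
        Finset.sum_le_sum (fun v _ => mul_le_mul_of_nonneg_left (step4 v) (hstar v).1)
    _ = β * ∑ v, ystar v := by
        rw [← Finset.sum_mul]
        ring
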